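/- Let Γ be a finite connected simple graph in which no vertex is a singleton twin, and suppose the twin relation partitions V(Γ) into n twin classes of sizes m₁, m₂, …, m_n. Then the metric dimension of Γ equals (Σ_{i=1}^{n} m_i) − n. -/

import Mathlib

open SimpleGraph

/-- `W` is a resolving set for the graph `Γ`: any two distinct vertices are
distinguished by their distance to some element of `W`. -/
def IsResolvingSet {V : Type*} (Γ : SimpleGraph V) (W : Set V) : Prop :=
  ∀ u v : V, u ≠ v → ∃ w ∈ W, Γ.dist u w ≠ Γ.dist v w

/-- The metric dimension of a graph: the least cardinality of a resolving set. -/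
noncomputable def metricDim {V : Type*} (Γ : SimpleGraph V) : ℕ :=
  sInf {n | ∃ W : Set V, W.Finite ∧ W.ncard = n ∧ IsResolvingSet Γ W}

/-- A minimal resolving set: a resolving set no proper subset of which resolves. -/
def IsMinimalResolvingSet {V : Type*} (Γ : SimpleGraph V) (W : Set V) : Prop :=
  IsResolvingSet Γ W ∧ ∀ W' : Set V, W' ⊂ W → ¬ IsResolvingSet Γ W'

/-- Two vertices are twins if they have the same open neighborhood or the same
closed neighborhood. -/
def AreTwins {V : Type*} (Γ : SimpleGraph V) (u v : V) : Prop :=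
  Γ.neighborSet u = Γ.neighborSet v ∨
    insert u (Γ.neighborSet u) = insert v (Γ.neighborSet v)

/-- The twin class of a vertex. -/
def twinClass {V : Type*} (Γ : SimpleGraph V) (u : V) : Set V :=
  {v | AreTwins Γ u v}

/-- The number of twin classes of a graph. -/
noncomputable def twinClassCount {V : Type*} (Γ : SimpleGraph V) : ℕ :=
  {S : Set V | ∃ u : V, S = twinClass Γ u}.ncard

/-- Resolving sets of `Γ` have the exchange property. -/
def HasExchangeProperty {V : Type*} (Γ : SimpleGraph V) : Prop :=
  ∀ W₁ W₂ : Set V, IsMinimalResolvingSet Γ W₁ → IsMinimalResolvingSet Γ W₂ →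
    ∀ u ∈ W₁, ∃ v ∈ W₂, IsMinimalResolvingSet Γ ((W₁ \ {u}) ∪ {v})

/-- The (undirected) power graph of a group `G`: distinct `x`, `y` are adjacent
iff one is a positive power of the other. -/
def powerGraph (G : Type*) [Group G] : SimpleGraph G :=
  SimpleGraph.fromRel (fun x y => ∃ m : ℕ, 0 < m ∧ y = x ^ m)

/-- `R{x,y}`: the set of vertices having different distances to `x` and `y`. -/
def Rset {V : Type*} (Γ : SimpleGraph V) (x y : V) : Set V :=
  {z | Γ.dist x z ≠ Γ.dist y z}

section AuxTwin
variable {V : Type*} {Γ : SimpleGraph V}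

lemma areTwins_refl (u : V) : AreTwins Γ u u := Or.inl rfl

lemma areTwins_symm {u v : V} (h : AreTwins Γ u v) : AreTwins Γ v u :=
  h.imp Eq.symm Eq.symm

lemma areTwins_trans {u v w : V} (h1 : AreTwins Γ u v) (h2 : AreTwins Γ v w) :
    AreTwins Γ u w := by
  rcases h1 with h1 | h1 <;> rcases h2 with h2 | h2
  · exact Or.inl (h1.trans h2)
  · -- N u = N v, N[v] = N[w]
    by_cases hvw : v = w
    · exact Or.inl (hvw ▸ h1)
    by_cases huv : u = v
    · exact Or.inr (huv ▸ h2)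
    by_cases huw : u = w
    · exact Or.inl (huw ▸ rfl)
    exfalso
    have hw : w ∈ insert v (Γ.neighborSet v) := by
      rw [h2]; exact Set.mem_insert _ _
    have hwNv : w ∈ Γ.neighborSet v := by
      rcases Set.mem_insert_iff.mp hw with h | h
      · exact absurd h.symm hvw
      · exact h
    have hadj_uw : Γ.Adj u w := by
      have : w ∈ Γ.neighborSet u := h1 ▸ hwNv
      exact this
    have huNw : u ∈ insert w (Γ.neighborSet w) :=
      Set.mem_insert_of_mem _ (hadj_uw.symm)
    rw [← h2] at huNw
    rcases Set.mem_insert_iff.mp huNw with h | h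
    · exact huv h
    · have : u ∈ Γ.neighborSet u := h1 ▸ h
      exact Γ.irrefl this
  · -- N[u] = N[v], N v = N w
    by_cases huv : u = v
    · exact Or.inl (huv ▸ h2)
    by_cases hvw : v = w
    · exact Or.inr (hvw ▸ h1)
    by_cases huw : u = w
    · exact Or.inl (huw ▸ rfl)
    exfalso
    have hu : u ∈ insert v (Γ.neighborSet v) := by
      rw [← h1]; exact Set.mem_insert _ _
    have huNv : u ∈ Γ.neighborSet v := by
      rcases Set.mem_insert_iff.mp hu with h | h
      · exact absurd h huv
      · exact h
    have hadj_wu : Γ.Adj w u := by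
      have : u ∈ Γ.neighborSet w := h2 ▸ huNv
      exact this
    have hwNu : w ∈ insert u (Γ.neighborSet u) :=
      Set.mem_insert_of_mem _ (hadj_wu.symm)
    rw [h1] at hwNu
    rcases Set.mem_insert_iff.mp hwNu with h | h
    · exact hvw h.symm
    · have : w ∈ Γ.neighborSet w := h2 ▸ h
      exact Γ.irrefl this
  · exact Or.inr (h1.trans h2)

lemma dist_le_of_twin (hconn : Γ.Connected) {x y z : V}
    (ht : AreTwins Γ x y) (hzy : z ≠ y) :
    Γ.dist x z ≤ Γ.dist y z := by
  obtain ⟨p, hp⟩ := hconn.exists_walk_length_eq_dist y z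
  obtain ⟨b, hadj, q, rfl⟩ := p.exists_eq_cons_of_ne (Ne.symm hzy)
  have hb : b = x ∨ b ∈ Γ.neighborSet x := by
    rcases ht with h | h
    · refine Or.inr ?_
      have hb' : b ∈ Γ.neighborSet y := hadj
      rw [h]
      exact hb'
    · have : b ∈ insert y (Γ.neighborSet y) :=
        Set.mem_insert_of_mem _ (hadj : b ∈ Γ.neighborSet y)
      rw [← h] at this
      exact Set.mem_insert_iff.mp this
  rw [SimpleGraph.Walk.length_cons] at hp
  rcases hb with h | hb
  · have hle : Γ.dist x z ≤ q.length := by subst h; exact Γ.dist_le q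
    omega
  · have : Γ.dist x z ≤ (SimpleGraph.Walk.cons (by exact hb) q).length := Γ.dist_le _
    exact this.trans_eq (by rw [← hp]; rfl)

lemma dist_eq_of_twin (hconn : Γ.Connected) {x y z : V}
    (ht : AreTwins Γ x y) (hzx : z ≠ x) (hzy : z ≠ y) :
    Γ.dist x z = Γ.dist y z :=
  le_antisymm (dist_le_of_twin hconn ht hzy)
    (dist_le_of_twin hconn (areTwins_symm ht) hzx)

lemma exists_dist_ne (hconn : Γ.Connected) {u v : V} (hne : u ≠ v)
    (ht : ¬ AreTwins Γ u v) :
    ∃ z, z ≠ u ∧ z ≠ v ∧ Γ.dist u z ≠ Γ.dist v z := by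
  by_cases hadj : Γ.Adj u v
  · have hI : insert u (Γ.neighborSet u) ≠ insert v (Γ.neighborSet v) :=
      fun h => ht (Or.inr h)
    obtain ⟨z, hz⟩ : ∃ z, ¬ (z ∈ insert u (Γ.neighborSet u) ↔ z ∈ insert v (Γ.neighborSet v)) := by
      by_contra h
      push_neg at h
      exact hI (Set.ext fun z => h z)
    rcases (not_iff.mp hz) with hz'
    rcases Classical.em (z ∈ insert u (Γ.neighborSet u)) with hin | hin
    · have hout : z ∉ insert v (Γ.neighborSet v) := fun h => (hz ⟨fun _ => h, fun _ => hin⟩)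
      have hzv : z ≠ v := fun h => hout (h ▸ Set.mem_insert _ _)
      have hnadj : ¬ Γ.Adj v z := fun h => hout (Set.mem_insert_of_mem _ h)
      have hzu : z ≠ u := by
        rintro rfl
        exact hout (Set.mem_insert_of_mem _ (hadj.symm))
      have hadjuz : Γ.Adj u z := by
        rcases Set.mem_insert_iff.mp hin with h | h
        · exact absurd h hzu
        · exact h
      refine ⟨z, hzu, hzv, ?_⟩
      rw [SimpleGraph.dist_eq_one_iff_adj.mpr hadjuz]
      exact fun h => hnadj (SimpleGraph.dist_eq_one_iff_adj.mp h.symm)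
    · have hin' : z ∈ insert v (Γ.neighborSet v) := by
        rcases not_iff.mp hz with h
        exact (not_iff.mp hz).mp hin
      have hzu : z ≠ u := fun h => hin (h ▸ Set.mem_insert _ _)
      have hnadj : ¬ Γ.Adj u z := fun h => hin (Set.mem_insert_of_mem _ h)
      have hzv : z ≠ v := by
        rintro rfl
        exact hin (Set.mem_insert_of_mem _ hadj)
      have hadjvz : Γ.Adj v z := by
        rcases Set.mem_insert_iff.mp hin' with h | h
        · exact absurd h hzv
        · exact h
      refine ⟨z, hzu, hzv, ?_⟩
      rw [SimpleGraph.dist_eq_one_iff_adj.mpr hadjvz]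
      exact fun h => hnadj (SimpleGraph.dist_eq_one_iff_adj.mp h)
  · have hN : Γ.neighborSet u ≠ Γ.neighborSet v := fun h => ht (Or.inl h)
    obtain ⟨z, hz⟩ : ∃ z, ¬ (z ∈ Γ.neighborSet u ↔ z ∈ Γ.neighborSet v) := by
      by_contra h
      push_neg at h
      exact hN (Set.ext fun z => h z)
    rcases Classical.em (z ∈ Γ.neighborSet u) with hin | hin
    · have hout : ¬ Γ.Adj v z := fun h => hz ⟨fun _ => h, fun _ => hin⟩
      have hadjuz : Γ.Adj u z := hin
      have hzu : z ≠ u := (Γ.ne_of_adj hadjuz).symm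
      have hzv : z ≠ v := by rintro rfl; exact hadj hadjuz
      refine ⟨z, hzu, hzv, ?_⟩
      rw [SimpleGraph.dist_eq_one_iff_adj.mpr hadjuz]
      exact fun h => hout (SimpleGraph.dist_eq_one_iff_adj.mp h.symm)
    · have hin' : Γ.Adj v z := (not_iff.mp hz).mp hin
      have hzv : z ≠ v := (Γ.ne_of_adj hin').symm
      have hzu : z ≠ u := by rintro rfl; exact hadj (hin'.symm)
      refine ⟨z, hzu, hzv, ?_⟩
      rw [SimpleGraph.dist_eq_one_iff_adj.mpr hin']
      exact fun h => hin (SimpleGraph.dist_eq_one_iff_adj.mp h)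

lemma ncard_iUnion_fin {V : Type*} [Fintype V] {n : ℕ} (S : Fin n → Set V)
    (hd : ∀ i j, i ≠ j → Disjoint (S i) (S j)) :
    (⋃ i, S i).ncard = ∑ i, (S i).ncard := by
  classical
  have h1 : (⋃ i, S i).toFinset = Finset.univ.biUnion (fun i => (S i).toFinset) := by
    ext x; simp
  rw [Set.ncard_eq_toFinset_card', h1, Finset.card_biUnion]
  · simp [Set.ncard_eq_toFinset_card']
  · intro i _ j _ hij
    exact Set.disjoint_toFinset.mpr (hd i j hij)

end AuxTwin


lemma dist_eq_of_twin' {V : Type*} {Γ : SimpleGraph V} (hconn : Γ.Connected) {x y z : V}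
    (ht : AreTwins Γ x y) (hzx : z ≠ x) (hzy : z ≠ y) :
    Γ.dist z x = Γ.dist z y :=
  calc Γ.dist z x = Γ.dist x z := SimpleGraph.dist_comm
    _ = Γ.dist y z := dist_eq_of_twin hconn ht hzx hzy
    _ = Γ.dist z y := SimpleGraph.dist_comm

/-- For a finite connected graph with no singleton twin whose twin
classes have sizes `m₁, …, m_n`, the metric dimension equals `(∑ mᵢ) - n`. -/
theorem metricDim_eq_sum_sub_of_no_singleton_twin
    {V : Type*} [Fintype V] (Γ : SimpleGraph V) (hconn : Γ.Connected)
    (hns : ∀ u : V, twinClass Γ u ≠ {u})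
    (n : ℕ) (C : Fin n → Set V) (m : Fin n → ℕ)
    (hC : ∀ i, ∃ u : V, C i = twinClass Γ u)
    (hsize : ∀ i, (C i).ncard = m i)
    (hdisj : ∀ i j, i ≠ j → Disjoint (C i) (C j))
    (hcover : (⋃ i, C i) = Set.univ) :
    metricDim Γ = (∑ i, m i) - n := by
  classical
  have hCne : ∀ i, (C i).Nonempty := by
    intro i; obtain ⟨u, hu⟩ := hC i; exact ⟨u, hu ▸ areTwins_refl u⟩
  choose rep hrep using hCne
  have hidx : ∀ x : V, ∃ i, x ∈ C i := by
    intro x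
    have hx : x ∈ ⋃ i, C i := hcover ▸ Set.mem_univ x
    simpa using hx
  have huniq : ∀ x (i j : Fin n), x ∈ C i → x ∈ C j → i = j := by
    intro x i j hi hj
    by_contra hij
    exact (hdisj i j hij).ne_of_mem hi hj rfl
  have hclosed : ∀ (i : Fin n) (x y : V), x ∈ C i → AreTwins Γ x y → y ∈ C i := by
    intro i x y hx ht
    obtain ⟨a, ha⟩ := hC i
    rw [ha] at hx ⊢
    exact areTwins_trans hx ht
  have htwins : ∀ (i : Fin n) (x y : V), x ∈ C i → y ∈ C i → AreTwins Γ x y := by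
    intro i x y hx hy
    obtain ⟨a, ha⟩ := hC i
    rw [ha] at hx hy
    exact areTwins_trans (areTwins_symm hx) hy
  have hrepC : ∀ (i : Fin n) (x : V), x ∈ C i → x ∈ Set.range rep → x = rep i := by
    rintro i x hx ⟨j, rfl⟩
    rw [huniq (rep j) j i (hrep j) hx]
  have hrepinj : Function.Injective rep := by
    intro i j h
    exact huniq (rep i) i j (hrep i) (h ▸ hrep j)
  have hsum : ∑ i, m i = Fintype.card V := by
    calc ∑ i, m i = ∑ i, (C i).ncard :=
          Finset.sum_congr rfl fun i _ => (hsize i).symm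
      _ = (⋃ i, C i).ncard := (ncard_iUnion_fin C hdisj).symm
      _ = Fintype.card V := by rw [hcover, Set.ncard_univ, Nat.card_eq_fintype_card]
  set W : Set V := Set.univ \ Set.range rep with hWdef
  have hWmem : ∀ x : V, x ∈ W ↔ x ∉ Set.range rep := by intro x; simp [hWdef]
  have hres : IsResolvingSet Γ W := by
    intro u v huv
    by_cases ht : AreTwins Γ u v
    · obtain ⟨i, hui⟩ := hidx u
      have hvi : v ∈ C i := hclosed i u v hui ht
      have key : u ∈ W ∨ v ∈ W := by
        by_contra h
        push_neg at h
        have hu : u = rep i := hrepC i u hui (by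
          have := (hWmem u).not.mp h.1
          simpa using this)
        have hv : v = rep i := hrepC i v hvi (by
          have := (hWmem v).not.mp h.2
          simpa using this)
        exact huv (hu.trans hv.symm)
      rcases key with h | h
      · refine ⟨u, h, ?_⟩
        intro hd
        rw [Γ.dist_self] at hd
        exact huv ((hconn.dist_eq_zero_iff).mp hd.symm).symm
      · refine ⟨v, h, ?_⟩
        intro hd
        rw [Γ.dist_self] at hd
        exact huv ((hconn.dist_eq_zero_iff).mp hd)
    · obtain ⟨z, hzu, hzv, hzd⟩ := exists_dist_ne hconn huv ht
      by_cases hzW : z ∈ W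
      · exact ⟨z, hzW, hzd⟩
      · obtain ⟨i, hzi⟩ := hidx z
        have hzr : z ∈ Set.range rep := by
          have := (hWmem z).not.mp hzW
          simpa using this
        have hzrep : z = rep i := hrepC i z hzi hzr
        obtain ⟨z', hz'mem, hz'ne⟩ : ∃ z', z' ∈ twinClass Γ z ∧ z' ≠ z := by
          by_contra h
          push_neg at h
          apply hns z
          exact Set.eq_singleton_iff_unique_mem.mpr ⟨areTwins_refl z, fun x hx => h x hx⟩
        have htzz' : AreTwins Γ z z' := hz'mem
        have hz'i : z' ∈ C i := hclosed i z z' hzi htzz'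
        have hz'W : z' ∈ W := by
          rw [hWmem]
          intro hr
          exact hz'ne ((hrepC i z' hz'i hr).trans hzrep.symm)
        by_cases hz'u : z' = u
        · refine ⟨z', hz'W, ?_⟩
          rw [hz'u, Γ.dist_self]
          intro hd
          exact huv ((hconn.dist_eq_zero_iff).mp hd.symm).symm
        by_cases hz'v : z' = v
        · refine ⟨z', hz'W, ?_⟩
          rw [hz'v, Γ.dist_self]
          intro hd
          exact huv ((hconn.dist_eq_zero_iff).mp hd)
        refine ⟨z', hz'W, ?_⟩
        have e1 : Γ.dist u z' = Γ.dist u z :=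
          dist_eq_of_twin' hconn (areTwins_symm htzz')
            (fun h => hz'u h.symm) (fun h => hzu h.symm)
        have e2 : Γ.dist v z' = Γ.dist v z :=
          dist_eq_of_twin' hconn (areTwins_symm htzz')
            (fun h => hz'v h.symm) (fun h => hzv h.symm)
        rw [e1, e2]
        exact hzd
  have hWfin : W.Finite := Set.toFinite _
  have hWcard : W.ncard = Fintype.card V - n := by
    rw [hWdef, Set.ncard_diff (Set.subset_univ _) (Set.toFinite _), Set.ncard_univ,
      Nat.card_eq_fintype_card]
    congr 1
    rw [← Set.image_univ, Set.ncard_image_of_injective _ hrepinj, Set.ncard_univ,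
      Nat.card_eq_fintype_card, Fintype.card_fin]
  have hlb : ∀ k ∈ {k | ∃ W : Set V, W.Finite ∧ W.ncard = k ∧ IsResolvingSet Γ W},
      Fintype.card V - n ≤ k := by
    rintro k ⟨W', -, rfl, hWres⟩
    have h1 : ∀ i, (C i \ W').ncard ≤ 1 := by
      intro i
      rw [Set.ncard_le_one (Set.toFinite _)]
      rintro a ⟨hai, haW⟩ b ⟨hbi, hbW⟩
      by_contra hab
      obtain ⟨w, hwW, hwd⟩ := hWres a b hab
      have hwa : w ≠ a := fun h => haW (h ▸ hwW)
      have hwb : w ≠ b := fun h => hbW (h ▸ hwW)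
      exact hwd (dist_eq_of_twin hconn (htwins i a b hai hbi) hwa hwb)
    have h2 : ∀ i, (C i).ncard ≤ (C i ∩ W').ncard + 1 := by
      intro i
      have hdj : Disjoint (C i ∩ W') (C i \ W') :=
        Set.disjoint_left.mpr (fun x hx hx2 => hx2.2 hx.2)
      calc (C i).ncard = ((C i ∩ W') ∪ (C i \ W')).ncard := by
            rw [Set.inter_union_diff]
        _ = (C i ∩ W').ncard + (C i \ W').ncard :=
            Set.ncard_union_eq hdj (Set.toFinite _) (Set.toFinite _)
        _ ≤ (C i ∩ W').ncard + 1 := by have := h1 i; omega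
    have h3 : (⋃ i, C i ∩ W') = W' := by
      rw [← Set.iUnion_inter, hcover, Set.univ_inter]
    have h4 : ∑ i, (C i ∩ W').ncard = W'.ncard := by
      rw [← ncard_iUnion_fin (fun i => C i ∩ W')
        (fun i j hij => (hdisj i j hij).mono Set.inter_subset_left Set.inter_subset_left), h3]
    have h5 : Fintype.card V ≤ W'.ncard + n := by
      calc Fintype.card V = ∑ i, (C i).ncard := by
            rw [← hsum]; exact Finset.sum_congr rfl fun i _ => (hsize i).symm
        _ ≤ ∑ i, ((C i ∩ W').ncard + 1) := Finset.sum_le_sum (fun i _ => h2 i)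
        _ = W'.ncard + n := by rw [Finset.sum_add_distrib, h4]; simp
    omega
  rw [hsum]
  unfold metricDim
  exact le_antisymm (Nat.sInf_le ⟨W, hWfin, hWcard, hres⟩)
    (le_csInf ⟨Fintype.card V - n, W, hWfin, hWcard, hres⟩ hlb)
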